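/- arXiv:1112.6172 — 2 statements merged into one kernel-verified Lean document; each statement's English description precedes it below -/
import Mathlib

section
/- Let G and H be finite simple graphs with a(G) ≤ 1/2 or a(H) ≤ 1/2, where a(K) = max{|U|/(|U| + |N_K(U)|) : U a nonempty independent set of K}. Then a(G × H) ≤ max{a(G), a(H)}. -/
open scoped Classical
open Filter

/-- Categorical (tensor) product of two simple graphs. -/
def tensorProd {α β : Type*} (G : SimpleGraph α) (H : SimpleGraph β) :
    SimpleGraph (α × β) where
  Adj p q := G.Adj p.1 q.1 ∧ H.Adj p.2 q.2
  symm := ⟨fun p q h => ⟨h.1.symm, h.2.symm⟩⟩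
  loopless := ⟨fun p h => G.irrefl h.1⟩

/-- A finset is independent. -/
def IsIndep {α : Type*} (G : SimpleGraph α) (U : Finset α) : Prop :=
  ∀ u ∈ U, ∀ v ∈ U, ¬ G.Adj u v

/-- Neighborhood of a finset. -/
noncomputable def nbhd {α : Type*} [Fintype α] (G : SimpleGraph α) (U : Finset α) : Finset α :=
  Finset.univ.filter (fun v => ∃ u ∈ U, G.Adj u v)

/-- Independence number. -/
noncomputable def alphaNum {α : Type*} [Fintype α] (G : SimpleGraph α) : ℕ :=
  sSup {n : ℕ | ∃ U : Finset α, IsIndep G U ∧ U.card = n}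

/-- Independence ratio. -/
noncomputable def iRatio {α : Type*} [Fintype α] (G : SimpleGraph α) : ℝ :=
  (alphaNum G : ℝ) / (Fintype.card α : ℝ)

/-- a(G): the maximum of |U|/(|U|+|N(U)|) over nonempty independent sets. -/
noncomputable def aRatio {α : Type*} [Fintype α] (G : SimpleGraph α) : ℝ :=
  sSup {r : ℝ | ∃ U : Finset α, U.Nonempty ∧ IsIndep G U ∧
    r = (U.card : ℝ) / ((U.card : ℝ) + ((nbhd G U).card : ℝ))}

/-- b(G): the minimum of |N(U)|/|U| over nonempty independent sets. -/
noncomputable def bRatio {α : Type*} [Fintype α] (G : SimpleGraph α) : ℝ :=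
  sInf {r : ℝ | ∃ U : Finset α, U.Nonempty ∧ IsIndep G U ∧
    r = ((nbhd G U).card : ℝ) / (U.card : ℝ)}

/-- a*(G). -/
noncomputable def aStar {α : Type*} [Fintype α] (G : SimpleGraph α) : ℝ :=
  if aRatio G ≤ 1/2 then aRatio G else 1

/-- k-th categorical power of G. -/
def tensorPow {α : Type*} (G : SimpleGraph α) (k : ℕ) : SimpleGraph (Fin k → α) where
  Adj x y := x ≠ y ∧ ∀ i, G.Adj (x i) (y i)
  symm := ⟨fun x y h => ⟨h.1.symm, fun i => (h.2 i).symm⟩⟩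
  loopless := ⟨fun x h => h.1 rfl⟩

/-- Disjoint union of two simple graphs. -/
def disjUnion {α β : Type*} (G : SimpleGraph α) (H : SimpleGraph β) :
    SimpleGraph (α ⊕ β) where
  Adj p q := match p, q with
    | Sum.inl a, Sum.inl b => G.Adj a b
    | Sum.inr a, Sum.inr b => H.Adj a b
    | _, _ => False
  symm := ⟨by rintro (a|a) (b|b) h <;> simp_all <;> exact h.symm⟩
  loopless := ⟨by rintro (a|a) h <;> simp_all⟩

open Finset

section MyAux

variable {α : Type*} [Fintype α]

lemma mem_nbhd_iff {G : SimpleGraph α} {U : Finset α} {v : α} :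
    v ∈ nbhd G U ↔ ∃ u ∈ U, G.Adj u v := by
  simp [nbhd]

lemma nbhd_mono (G : SimpleGraph α) {U V : Finset α} (h : U ⊆ V) :
    nbhd G U ⊆ nbhd G V := by
  intro v hv
  rcases mem_nbhd_iff.1 hv with ⟨u, hu, ha⟩
  exact mem_nbhd_iff.2 ⟨u, h hu, ha⟩

lemma aRatio_set_le_one {G : SimpleGraph α} {r : ℝ}
    (hr : r ∈ {r : ℝ | ∃ U : Finset α, U.Nonempty ∧ IsIndep G U ∧
      r = (U.card : ℝ) / ((U.card : ℝ) + ((nbhd G U).card : ℝ))}) : r ≤ 1 := by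
  obtain ⟨U, hU, -, rfl⟩ := hr
  have h1 : (0:ℝ) < U.card := by exact_mod_cast Finset.card_pos.2 hU
  have h2 : (0:ℝ) ≤ ((nbhd G U).card : ℝ) := by positivity
  rw [div_le_one (by linarith)]
  linarith

lemma aRatio_bddAbove (G : SimpleGraph α) :
    BddAbove {r : ℝ | ∃ U : Finset α, U.Nonempty ∧ IsIndep G U ∧
      r = (U.card : ℝ) / ((U.card : ℝ) + ((nbhd G U).card : ℝ))} :=
  ⟨1, fun _ hr => aRatio_set_le_one hr⟩

lemma ratio_le_aRatio {G : SimpleGraph α} {W : Finset α} (hW : W.Nonempty)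
    (hind : IsIndep G W) :
    (W.card : ℝ) / ((W.card : ℝ) + ((nbhd G W).card : ℝ)) ≤ aRatio G :=
  le_csSup (aRatio_bddAbove G) ⟨W, hW, hind, rfl⟩

lemma isIndep_singleton (G : SimpleGraph α) (a : α) : IsIndep G {a} := by
  intro u hu v hv
  simp only [Finset.mem_singleton] at hu hv
  subst hu; subst hv; simp

lemma aRatio_pos [Nonempty α] (G : SimpleGraph α) : 0 < aRatio G := by
  obtain ⟨a⟩ := ‹Nonempty α›
  refine lt_of_lt_of_le ?_ (ratio_le_aRatio (Finset.singleton_nonempty a) (isIndep_singleton G a))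
  have h1 : ((({a} : Finset α).card : ℝ)) = 1 := by simp
  rw [h1]
  positivity

lemma aRatio_le_one [Nonempty α] (G : SimpleGraph α) : aRatio G ≤ 1 := by
  obtain ⟨a⟩ := ‹Nonempty α›
  exact csSup_le ⟨_, ⟨{a}, Finset.singleton_nonempty a, isIndep_singleton G a, rfl⟩⟩
    fun r hr => aRatio_set_le_one hr

lemma master_set {G : SimpleGraph α} {t : ℝ} (ht : aRatio G ≤ t) (ht0 : 0 < t) (ht1 : t ≤ 1)
    (S : Finset α) :
    (1 - t) / t * ((S \ nbhd G S).card : ℝ) + ((S ∩ nbhd G S).card : ℝ)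
      ≤ ((nbhd G S).card : ℝ) := by
  classical
  set W := S \ nbhd G S with hWdef
  have hWind : IsIndep G W := by
    intro u hu v hv hadj
    exact (Finset.mem_sdiff.1 hv).2 (mem_nbhd_iff.2 ⟨u, (Finset.mem_sdiff.1 hu).1, hadj⟩)
  have hexp : (1 - t) / t * (W.card : ℝ) ≤ ((nbhd G W).card : ℝ) := by
    rcases W.eq_empty_or_nonempty with h | hW
    · rw [h]
      have : (((∅ : Finset α)).card : ℝ) = 0 := by simp
      rw [this, mul_zero]
      positivity
    · have h := (ratio_le_aRatio hW hWind).trans ht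
      have hc : (0:ℝ) < W.card := by exact_mod_cast Finset.card_pos.2 hW
      have hn : (0:ℝ) ≤ ((nbhd G W).card : ℝ) := by positivity
      rw [div_le_iff₀ (by linarith)] at h
      rw [div_mul_eq_mul_div, div_le_iff₀ ht0]
      nlinarith
  have hdisj : Disjoint (nbhd G W) (S ∩ nbhd G S) := by
    rw [Finset.disjoint_left]
    intro v hv hv2
    rcases mem_nbhd_iff.1 hv with ⟨u, hu, ha⟩
    exact (Finset.mem_sdiff.1 hu).2
      (mem_nbhd_iff.2 ⟨v, (Finset.mem_inter.1 hv2).1, ha.symm⟩)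
  have hsub : nbhd G W ∪ (S ∩ nbhd G S) ⊆ nbhd G S :=
    Finset.union_subset (nbhd_mono G Finset.sdiff_subset) Finset.inter_subset_right
  have hcard : (nbhd G W).card + (S ∩ nbhd G S).card ≤ (nbhd G S).card := by
    rw [← Finset.card_union_of_disjoint hdisj]
    exact Finset.card_le_card hsub
  have hcardR : ((nbhd G W).card : ℝ) + ((S ∩ nbhd G S).card : ℝ) ≤ ((nbhd G S).card : ℝ) := by
    exact_mod_cast hcard
  linarith

lemma key_G {G : SimpleGraph α} {t : ℝ} (hG2 : aRatio G ≤ 1/2) (ht : aRatio G ≤ t)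
    (ht0 : 0 < t) (ht1 : t ≤ 1) (S C : Finset α) (hC : C ⊆ S \ nbhd G S) :
    (S.card : ℝ) + ((1 - t)/t - 1) * (C.card : ℝ) ≤ ((nbhd G S).card : ℝ) := by
  have h1 := master_set ht ht0 ht1 S
  have h2 := master_set hG2 (by norm_num) (by norm_num) S
  have hsplit : (S ∩ nbhd G S).card + (S \ nbhd G S).card = S.card :=
    Finset.card_inter_add_card_sdiff S (nbhd G S)
  have hsplitR : ((S ∩ nbhd G S).card : ℝ) + ((S \ nbhd G S).card : ℝ) = (S.card : ℝ) := by
    exact_mod_cast hsplit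
  have hCW : (C.card : ℝ) ≤ ((S \ nbhd G S).card : ℝ) := by
    exact_mod_cast Finset.card_le_card hC
  have hC0 : (0:ℝ) ≤ (C.card : ℝ) := by positivity
  have hhalf : ((1:ℝ) - 1/2)/(1/2) = 1 := by norm_num
  rw [hhalf, one_mul] at h2
  rcases le_or_gt ((1-t)/t) 1 with hk | hk
  · nlinarith
  · nlinarith [mul_nonneg (sub_nonneg.2 hk.le) (sub_nonneg.2 hCW)]

end MyAux

section Count
variable {α β : Type*} [Fintype α] [Fintype β]

lemma card_eq_sum_fiber_fst (T : Finset (α × β)) :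
    T.card = ∑ x : α, (univ.filter fun y => (x, y) ∈ T).card := by
  classical
  rw [Finset.card_eq_sum_card_fiberwise (f := Prod.fst) (t := univ) (fun p _ => mem_univ _)]
  refine Finset.sum_congr rfl fun x _ => ?_
  refine Finset.card_bij (fun p _ => p.2) ?_ ?_ ?_
  · rintro ⟨a, b⟩ hp
    simp only [Finset.mem_filter, Finset.mem_univ, true_and] at hp ⊢
    obtain ⟨h1, h2⟩ := hp
    subst h2
    exact h1
  · rintro ⟨a, b⟩ hp ⟨c, d⟩ hq h
    simp only [Finset.mem_filter] at hp hq
    simp_all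
  · intro y hy
    simp only [Finset.mem_filter, Finset.mem_univ, true_and] at hy
    exact ⟨(x, y), Finset.mem_filter.2 ⟨hy, rfl⟩, rfl⟩

lemma card_eq_sum_fiber_snd (T : Finset (α × β)) :
    T.card = ∑ z : β, (univ.filter fun x => (x, z) ∈ T).card := by
  classical
  rw [Finset.card_eq_sum_card_fiberwise (f := Prod.snd) (t := univ) (fun p _ => mem_univ _)]
  refine Finset.sum_congr rfl fun z _ => ?_
  refine Finset.card_bij (fun p _ => p.1) ?_ ?_ ?_
  · rintro ⟨a, b⟩ hp
    simp only [Finset.mem_filter, Finset.mem_univ, true_and] at hp ⊢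
    obtain ⟨h1, h2⟩ := hp
    subst h2
    exact h1
  · rintro ⟨a, b⟩ hp ⟨c, d⟩ hq h
    simp only [Finset.mem_filter] at hp hq
    simp_all
  · intro x hx
    simp only [Finset.mem_filter, Finset.mem_univ, true_and] at hx
    exact ⟨(x, z), Finset.mem_filter.2 ⟨hx, rfl⟩, rfl⟩

lemma sum_card_fiber_eq (f : α → Finset β) (g : β → Finset α)
    (h : ∀ x z, z ∈ f x ↔ x ∈ g z) :
    ∑ x : α, (f x).card = ∑ z : β, (g z).card := by
  classical
  set T : Finset (α × β) := univ.filter (fun p => p.2 ∈ f p.1) with hT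
  have h1 : ∀ x, (univ.filter fun y => (x, y) ∈ T) = f x := by
    intro x; ext y; simp [hT]
  have h2 : ∀ z, (univ.filter fun x => (x, z) ∈ T) = g z := by
    intro z; ext x; simp [hT, h]
  calc ∑ x : α, (f x).card
      = ∑ x : α, (univ.filter fun y => (x, y) ∈ T).card :=
        Finset.sum_congr rfl (fun x _ => by rw [h1 x])
    _ = T.card := (card_eq_sum_fiber_fst T).symm
    _ = ∑ z : β, (univ.filter fun x => (x, z) ∈ T).card := card_eq_sum_fiber_snd T
    _ = ∑ z : β, (g z).card := Finset.sum_congr rfl (fun z _ => by rw [h2 z])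

end Count

section Core
variable {α β : Type*} [Fintype α] [Fintype β]

lemma core [Nonempty α] [Nonempty β]
    (G : SimpleGraph α) (H : SimpleGraph β) (hG : aRatio G ≤ 1/2)
    (U : Finset (α × β)) (hUne : U.Nonempty) (hind : IsIndep (tensorProd G H) U) :
    (U.card : ℝ) / ((U.card : ℝ) + ((nbhd (tensorProd G H) U).card : ℝ))
      ≤ max (aRatio G) (aRatio H) := by
  classical
  set t := max (aRatio G) (aRatio H) with htdef
  have htG : aRatio G ≤ t := le_max_left _ _
  have htH : aRatio H ≤ t := le_max_right _ _
  have ht0 : 0 < t := lt_of_lt_of_le (aRatio_pos G) htG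
  have ht1 : t ≤ 1 := max_le (aRatio_le_one G) (aRatio_le_one H)
  set k : ℝ := (1 - t)/t with hkdef
  set Ux : α → Finset β := fun x => univ.filter (fun y => (x, y) ∈ U) with hUxdef
  set Bx : α → Finset β := fun x => nbhd H (Ux x) with hBxdef
  set Q : β → Finset α := fun z => univ.filter (fun x => z ∈ Bx x) with hQdef
  set Cz : β → Finset α := fun z => univ.filter (fun x => (x, z) ∈ U ∧ z ∈ Bx x) with hCzdef
  -- per-fiber bound in H
  have F6 : ∀ x, k * ((Ux x \ Bx x).card : ℝ) + ((Ux x ∩ Bx x).card : ℝ) ≤ ((Bx x).card : ℝ) :=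
    fun x => master_set htH ht0 ht1 (Ux x)
  -- Cz z sits in the independent kernel of Q z
  have F5 : ∀ z, Cz z ⊆ Q z \ nbhd G (Q z) := by
    intro z x hx
    simp only [hCzdef, Finset.mem_filter, Finset.mem_univ, true_and] at hx
    obtain ⟨hxU, hxB⟩ := hx
    have hxQ : x ∈ Q z := by
      simp only [hQdef, Finset.mem_filter, Finset.mem_univ, true_and]
      exact hxB
    rw [Finset.mem_sdiff]
    refine ⟨hxQ, fun hmem => ?_⟩
    rcases mem_nbhd_iff.1 hmem with ⟨x'', hx''Q, hadj⟩
    simp only [hQdef, Finset.mem_filter, Finset.mem_univ, true_and] at hx''Q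
    rcases mem_nbhd_iff.1 hx''Q with ⟨w, hwU, hwz⟩
    simp only [hUxdef, Finset.mem_filter, Finset.mem_univ, true_and] at hwU
    exact hind _ hwU _ hxU ⟨hadj, hwz⟩
  have F7 : ∀ z, ((Q z).card : ℝ) + (k - 1) * ((Cz z).card : ℝ) ≤ ((nbhd G (Q z)).card : ℝ) :=
    fun z => key_G hG htG ht0 ht1 (Q z) (Cz z) (F5 z)
  -- fiber of N(U) over second coordinate
  have hfib : ∀ z : β, (univ.filter fun x' => (x', z) ∈ nbhd (tensorProd G H) U)
      = nbhd G (Q z) := by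
    intro z
    ext x'
    simp only [Finset.mem_filter, Finset.mem_univ, true_and]
    rw [mem_nbhd_iff, mem_nbhd_iff]
    constructor
    · rintro ⟨p, hpU, hadjG, hadjH⟩
      refine ⟨p.1, ?_, hadjG⟩
      simp only [hQdef, Finset.mem_filter, Finset.mem_univ, true_and]
      refine mem_nbhd_iff.2 ⟨p.2, ?_, hadjH⟩
      simp only [hUxdef, Finset.mem_filter, Finset.mem_univ, true_and]
      exact hpU
    · rintro ⟨x, hxQ, hadj⟩
      simp only [hQdef, Finset.mem_filter, Finset.mem_univ, true_and] at hxQ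
      rcases mem_nbhd_iff.1 hxQ with ⟨w, hw, hwz⟩
      simp only [hUxdef, Finset.mem_filter, Finset.mem_univ, true_and] at hw
      exact ⟨(x, w), hw, hadj, hwz⟩
  -- counting identities
  have F1 : (U.card : ℝ) = ∑ x : α, ((Ux x).card : ℝ) := by
    exact_mod_cast card_eq_sum_fiber_fst U
  have F2 : ((nbhd (tensorProd G H) U).card : ℝ) = ∑ z : β, ((nbhd G (Q z)).card : ℝ) := by
    have h := card_eq_sum_fiber_snd (nbhd (tensorProd G H) U)
    have h2 : (nbhd (tensorProd G H) U).card = ∑ z : β, (nbhd G (Q z)).card := by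
      rw [h]; exact Finset.sum_congr rfl fun z _ => by rw [hfib z]
    exact_mod_cast h2
  have F3 : ∑ x : α, ((Bx x).card : ℝ) = ∑ z : β, ((Q z).card : ℝ) := by
    have h := sum_card_fiber_eq Bx Q (by
      intro x z
      simp only [hQdef, Finset.mem_filter, Finset.mem_univ, true_and])
    exact_mod_cast h
  have F4 : ∑ x : α, ((Ux x ∩ Bx x).card : ℝ) = ∑ z : β, ((Cz z).card : ℝ) := by
    have h := sum_card_fiber_eq (fun x => Ux x ∩ Bx x) Cz (by
      intro x z
      simp only [hCzdef, hUxdef, Finset.mem_filter, Finset.mem_univ, true_and,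
        Finset.mem_inter])
    exact_mod_cast h
  have hsplit : ∀ x : α, ((Ux x).card : ℝ)
      = ((Ux x \ Bx x).card : ℝ) + ((Ux x ∩ Bx x).card : ℝ) := by
    intro x
    have h := Finset.card_inter_add_card_sdiff (Ux x) (Bx x)
    have h' : ((Ux x ∩ Bx x).card : ℝ) + ((Ux x \ Bx x).card : ℝ) = ((Ux x).card : ℝ) := by
      exact_mod_cast h
    linarith
  -- main inequality k|U| ≤ |N(U)|
  have hNU : k * (U.card : ℝ) ≤ ((nbhd (tensorProd G H) U).card : ℝ) := by
    have sumF6 : ∑ x : α, (k * ((Ux x \ Bx x).card : ℝ) + ((Ux x ∩ Bx x).card : ℝ))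
        ≤ ∑ x : α, ((Bx x).card : ℝ) := Finset.sum_le_sum fun x _ => F6 x
    have sumF7 : ∑ z : β, (((Q z).card : ℝ) + (k - 1) * ((Cz z).card : ℝ))
        ≤ ∑ z : β, ((nbhd G (Q z)).card : ℝ) := Finset.sum_le_sum fun z _ => F7 z
    have e1 : ∑ z : β, (((Q z).card : ℝ) + (k - 1) * ((Cz z).card : ℝ))
        = ∑ x : α, ((Bx x).card : ℝ) + (k - 1) * ∑ x : α, ((Ux x ∩ Bx x).card : ℝ) := by
      rw [Finset.sum_add_distrib, ← Finset.mul_sum, F3, F4]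
    have e2 : ∑ x : α, (k * ((Ux x \ Bx x).card : ℝ) + ((Ux x ∩ Bx x).card : ℝ))
        = k * (U.card : ℝ) - (k - 1) * ∑ x : α, ((Ux x ∩ Bx x).card : ℝ) := by
      have e3 : ∑ x : α, ((Ux x).card : ℝ)
          = ∑ x : α, ((Ux x \ Bx x).card : ℝ) + ∑ x : α, ((Ux x ∩ Bx x).card : ℝ) := by
        rw [← Finset.sum_add_distrib]
        exact Finset.sum_congr rfl fun x _ => hsplit x
      rw [F1, e3, Finset.sum_add_distrib, ← Finset.mul_sum]
      ring
    rw [F2]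
    linarith
  have hU0 : (0:ℝ) < U.card := by exact_mod_cast Finset.card_pos.2 hUne
  have hN0 : (0:ℝ) ≤ ((nbhd (tensorProd G H) U).card : ℝ) := by positivity
  rw [div_le_iff₀ (by linarith)]
  have hk : t * k = 1 - t := by
    rw [hkdef]; field_simp
  have hkey : t * (k * (U.card : ℝ)) = (1 - t) * (U.card : ℝ) := by
    rw [← mul_assoc, hk]
  have := mul_le_mul_of_nonneg_left hNU ht0.le
  rw [mul_add]
  nlinarith

end Core

section Swap
variable {α β : Type*} [Fintype α] [Fintype β]

lemma isIndep_swap {G : SimpleGraph α} {H : SimpleGraph β}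
    {U : Finset (α × β)} (h : IsIndep (tensorProd G H) U) :
    IsIndep (tensorProd H G) (U.image Prod.swap) := by
  intro u hu v hv hadj
  rcases Finset.mem_image.1 hu with ⟨p, hp, rfl⟩
  rcases Finset.mem_image.1 hv with ⟨q, hq, rfl⟩
  exact h p hp q hq ⟨hadj.2, hadj.1⟩

lemma nbhd_swap (G : SimpleGraph α) (H : SimpleGraph β) (U : Finset (α × β)) :
    nbhd (tensorProd H G) (U.image Prod.swap)
      = (nbhd (tensorProd G H) U).image Prod.swap := by
  ext ⟨y, x⟩
  rw [mem_nbhd_iff]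
  constructor
  · rintro ⟨u, hu, hadj⟩
    rcases Finset.mem_image.1 hu with ⟨p, hp, rfl⟩
    exact Finset.mem_image.2 ⟨(x, y), mem_nbhd_iff.2 ⟨p, hp, ⟨hadj.2, hadj.1⟩⟩, rfl⟩
  · intro hmem
    rcases Finset.mem_image.1 hmem with ⟨v, hv, hveq⟩
    have hv' : v = (x, y) := by
      have := congrArg Prod.swap hveq
      simpa using this
    subst hv'
    rcases mem_nbhd_iff.1 hv with ⟨p, hp, hadj⟩
    exact ⟨p.swap, Finset.mem_image_of_mem _ hp, ⟨hadj.2, hadj.1⟩⟩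

end Swap

theorem stmt3 {α β : Type*} [Fintype α] [Fintype β] [Nonempty α] [Nonempty β]
    (G : SimpleGraph α) (H : SimpleGraph β)
    (h : aRatio G ≤ 1/2 ∨ aRatio H ≤ 1/2) :
    aRatio (tensorProd G H) ≤ max (aRatio G) (aRatio H) := by
  classical
  have hne : Nonempty (α × β) := inferInstance
  unfold aRatio
  apply csSup_le
  · obtain ⟨p⟩ := hne
    exact ⟨_, ⟨{p}, Finset.singleton_nonempty p, isIndep_singleton _ p, rfl⟩⟩
  · intro r hr
    obtain ⟨U, hUne, hUind, rfl⟩ := hr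
    rcases h with hG | hH
    · exact core G H hG U hUne hUind
    · have h1 := core H G hH (U.image Prod.swap) (hUne.image _) (isIndep_swap hUind)
      rw [nbhd_swap, Finset.card_image_of_injective U Prod.swap_injective,
        Finset.card_image_of_injective _ Prod.swap_injective, max_comm] at h1
      exact h1
end

section
/- For every two nonempty finite simple graphs G and H, a^*(G ∪ H) = max{a^*(G), a^*(H)}, where G ∪ H denotes the disjoint union, a(K) = max{|U|/(|U|+|N_K(U)|) : U a nonempty independent set of K}, and a^*(K) = a(K) if a(K) ≤ 1/2, else 1. -/
open scoped Classical
open Filter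

section Aux
open Finset

variable {α β : Type*} [Fintype α] [Fintype β]

/-- The set of ratios defining `aRatio`. -/
def aSet (G : SimpleGraph α) : Set ℝ :=
  {r : ℝ | ∃ U : Finset α, U.Nonempty ∧ IsIndep G U ∧
    r = (U.card : ℝ) / ((U.card : ℝ) + ((nbhd G U).card : ℝ))}

lemma aRatio_eq_sSup (G : SimpleGraph α) : aRatio G = sSup (aSet G) := rfl

lemma aSet_nonneg {G : SimpleGraph α} {r : ℝ} (hr : r ∈ aSet G) : 0 ≤ r := by
  obtain ⟨U, hU, _, rfl⟩ := hr
  positivity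

lemma aSet_le_one {G : SimpleGraph α} {r : ℝ} (hr : r ∈ aSet G) : r ≤ 1 := by
  obtain ⟨U, hU, _, rfl⟩ := hr
  have h1 : (0:ℝ) ≤ ((nbhd G U).card : ℝ) := by positivity
  have h2 : (0:ℝ) ≤ (U.card : ℝ) := by positivity
  apply div_le_one_of_le₀ <;> linarith

lemma aSet_bddAbove (G : SimpleGraph α) : BddAbove (aSet G) :=
  ⟨1, fun _ hr => aSet_le_one hr⟩

lemma aSet_nonempty [Nonempty α] (G : SimpleGraph α) : (aSet G).Nonempty := by
  refine ⟨_, ⟨{Classical.arbitrary α}, Finset.singleton_nonempty _, ?_, rfl⟩⟩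
  intro u hu v hv hadj
  simp only [Finset.mem_singleton] at hu hv
  subst hu; subst hv
  exact G.irrefl hadj

lemma aRatio_nonneg [Nonempty α] (G : SimpleGraph α) : 0 ≤ aRatio G := by
  obtain ⟨r, hr⟩ := aSet_nonempty G
  exact (aSet_nonneg hr).trans (le_csSup (aSet_bddAbove G) hr)

lemma nbhd_empty (G : SimpleGraph α) : nbhd G (∅ : Finset α) = ∅ := by
  simp [nbhd]

lemma toLeft_nbhd (G : SimpleGraph α) (H : SimpleGraph β) (U : Finset (α ⊕ β)) :
    (nbhd (disjUnion G H) U).toLeft = nbhd G U.toLeft := by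
  ext x
  simp only [Finset.mem_toLeft, nbhd, Finset.mem_filter, Finset.mem_univ, true_and]
  constructor
  · rintro ⟨(u|u), hu, h⟩
    · exact ⟨u, hu, h⟩
    · exact h.elim
  · rintro ⟨u, hu, h⟩
    exact ⟨Sum.inl u, hu, h⟩

lemma toRight_nbhd (G : SimpleGraph α) (H : SimpleGraph β) (U : Finset (α ⊕ β)) :
    (nbhd (disjUnion G H) U).toRight = nbhd H U.toRight := by
  ext x
  simp only [Finset.mem_toRight, nbhd, Finset.mem_filter, Finset.mem_univ, true_and]
  constructor
  · rintro ⟨(u|u), hu, h⟩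
    · exact h.elim
    · exact ⟨u, hu, h⟩
  · rintro ⟨u, hu, h⟩
    exact ⟨Sum.inr u, hu, h⟩

lemma card_nbhd_disjUnion (G : SimpleGraph α) (H : SimpleGraph β) (U : Finset (α ⊕ β)) :
    (nbhd (disjUnion G H) U).card
      = (nbhd G U.toLeft).card + (nbhd H U.toRight).card := by
  rw [← Finset.card_toLeft_add_card_toRight, toLeft_nbhd, toRight_nbhd]

lemma isIndep_toLeft {G : SimpleGraph α} {H : SimpleGraph β} {U : Finset (α ⊕ β)}
    (h : IsIndep (disjUnion G H) U) : IsIndep G U.toLeft :=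
  fun u hu v hv hadj =>
    h _ (Finset.mem_toLeft.1 hu) _ (Finset.mem_toLeft.1 hv) hadj

lemma isIndep_toRight {G : SimpleGraph α} {H : SimpleGraph β} {U : Finset (α ⊕ β)}
    (h : IsIndep (disjUnion G H) U) : IsIndep H U.toRight :=
  fun u hu v hv hadj =>
    h _ (Finset.mem_toRight.1 hu) _ (Finset.mem_toRight.1 hv) hadj

lemma aSet_left_subset (G : SimpleGraph α) (H : SimpleGraph β) :
    aSet G ⊆ aSet (disjUnion G H) := by
  rintro r ⟨U, hU, hind, rfl⟩
  refine ⟨U.map Function.Embedding.inl, hU.map, ?_, ?_⟩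
  · rintro u hu v hv hadj
    simp only [Finset.mem_map, Function.Embedding.inl_apply] at hu hv
    obtain ⟨a, ha, rfl⟩ := hu
    obtain ⟨b, hb, rfl⟩ := hv
    exact hind a ha b hb hadj
  · have h1 : (U.map (Function.Embedding.inl (β := β))).toLeft = U := by
      ext x; simp
    have h2 : (U.map (Function.Embedding.inl (β := β))).toRight = ∅ := by
      ext x; simp
    rw [Finset.card_map, card_nbhd_disjUnion, h1, h2, nbhd_empty]
    simp

lemma aSet_right_subset (G : SimpleGraph α) (H : SimpleGraph β) :
    aSet H ⊆ aSet (disjUnion G H) := by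
  rintro r ⟨U, hU, hind, rfl⟩
  refine ⟨U.map Function.Embedding.inr, hU.map, ?_, ?_⟩
  · rintro u hu v hv hadj
    simp only [Finset.mem_map, Function.Embedding.inr_apply] at hu hv
    obtain ⟨a, ha, rfl⟩ := hu
    obtain ⟨b, hb, rfl⟩ := hv
    exact hind a ha b hb hadj
  · have h1 : (U.map (Function.Embedding.inr (α := α))).toRight = U := by
      ext x; simp
    have h2 : (U.map (Function.Embedding.inr (α := α))).toLeft = ∅ := by
      ext x; simp
    rw [Finset.card_map, card_nbhd_disjUnion, h1, h2, nbhd_empty]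
    simp

lemma aRatio_disjUnion [Nonempty α] [Nonempty β] (G : SimpleGraph α) (H : SimpleGraph β) :
    aRatio (disjUnion G H) = max (aRatio G) (aRatio H) := by
  set M := max (aRatio G) (aRatio H) with hM
  apply le_antisymm
  · rw [aRatio_eq_sSup]
    apply csSup_le (aSet_nonempty _)
    rintro r ⟨U, hU, hind, rfl⟩
    set A := U.toLeft with hA
    set B := U.toRight with hB
    have hcardU : (U.card : ℝ) = (A.card : ℝ) + (B.card : ℝ) := by
      rw [hA, hB]; exact_mod_cast (Finset.card_toLeft_add_card_toRight (u := U)).symm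
    have hcardN : ((nbhd (disjUnion G H) U).card : ℝ)
        = ((nbhd G A).card : ℝ) + ((nbhd H B).card : ℝ) := by
      exact_mod_cast congrArg (Nat.cast (R := ℝ)) (card_nbhd_disjUnion G H U)
    have hMG : aRatio G ≤ M := le_max_left _ _
    have hMH : aRatio H ≤ M := le_max_right _ _
    have hM0 : 0 ≤ M := le_trans (aRatio_nonneg G) hMG
    have key1 : (A.card : ℝ) ≤ M * ((A.card : ℝ) + ((nbhd G A).card : ℝ)) := by
      rcases A.eq_empty_or_nonempty with h | h
      · simp [h, nbhd_empty]
      · have hmem : (A.card : ℝ) / ((A.card : ℝ) + ((nbhd G A).card : ℝ)) ∈ aSet G :=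
          ⟨A, h, isIndep_toLeft hind, rfl⟩
        have hle : (A.card : ℝ) / ((A.card : ℝ) + ((nbhd G A).card : ℝ)) ≤ M :=
          le_trans (le_csSup (aSet_bddAbove G) hmem) hMG
        have hpos : (0:ℝ) < (A.card : ℝ) + ((nbhd G A).card : ℝ) := by
          have : 0 < A.card := Finset.card_pos.2 h
          have : (0:ℝ) < (A.card : ℝ) := by exact_mod_cast this
          have h2 : (0:ℝ) ≤ ((nbhd G A).card : ℝ) := by positivity
          linarith
        calc (A.card : ℝ) = ((A.card : ℝ) / ((A.card : ℝ) + ((nbhd G A).card : ℝ)))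
              * ((A.card : ℝ) + ((nbhd G A).card : ℝ)) := by field_simp
          _ ≤ M * ((A.card : ℝ) + ((nbhd G A).card : ℝ)) :=
              mul_le_mul_of_nonneg_right hle hpos.le
    have key2 : (B.card : ℝ) ≤ M * ((B.card : ℝ) + ((nbhd H B).card : ℝ)) := by
      rcases B.eq_empty_or_nonempty with h | h
      · simp [h, nbhd_empty]
      · have hmem : (B.card : ℝ) / ((B.card : ℝ) + ((nbhd H B).card : ℝ)) ∈ aSet H :=
          ⟨B, h, isIndep_toRight hind, rfl⟩
        have hle : (B.card : ℝ) / ((B.card : ℝ) + ((nbhd H B).card : ℝ)) ≤ M :=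
          le_trans (le_csSup (aSet_bddAbove H) hmem) hMH
        have hpos : (0:ℝ) < (B.card : ℝ) + ((nbhd H B).card : ℝ) := by
          have : 0 < B.card := Finset.card_pos.2 h
          have : (0:ℝ) < (B.card : ℝ) := by exact_mod_cast this
          have h2 : (0:ℝ) ≤ ((nbhd H B).card : ℝ) := by positivity
          linarith
        calc (B.card : ℝ) = ((B.card : ℝ) / ((B.card : ℝ) + ((nbhd H B).card : ℝ)))
              * ((B.card : ℝ) + ((nbhd H B).card : ℝ)) := by field_simp
          _ ≤ M * ((B.card : ℝ) + ((nbhd H B).card : ℝ)) :=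
              mul_le_mul_of_nonneg_right hle hpos.le
    have hUpos : (0:ℝ) < (U.card : ℝ) + ((nbhd (disjUnion G H) U).card : ℝ) := by
      have : 0 < U.card := Finset.card_pos.2 hU
      have h1 : (0:ℝ) < (U.card : ℝ) := by exact_mod_cast this
      have h2 : (0:ℝ) ≤ ((nbhd (disjUnion G H) U).card : ℝ) := by positivity
      linarith
    rw [div_le_iff₀ hUpos, hcardU, hcardN]
    nlinarith [key1, key2]
  · apply max_le
    · rw [aRatio_eq_sSup, aRatio_eq_sSup]
      exact csSup_le_csSup (aSet_bddAbove _) (aSet_nonempty G) (aSet_left_subset G H)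
    · rw [aRatio_eq_sSup, aRatio_eq_sSup]
      exact csSup_le_csSup (aSet_bddAbove _) (aSet_nonempty H) (aSet_right_subset G H)

end Aux

theorem stmt14 {α β : Type*} [Fintype α] [Fintype β] [Nonempty α] [Nonempty β]
    (G : SimpleGraph α) (H : SimpleGraph β) :
    aStar (disjUnion G H) = max (aStar G) (aStar H) := by
  have h := aRatio_disjUnion G H
  unfold aStar
  rw [h]
  rcases le_total (aRatio G) (aRatio H) with hGH | hGH
  · rw [max_eq_right hGH]
    by_cases hH : aRatio H ≤ 1/2
    · rw [if_pos hH, if_pos (hGH.trans hH), max_eq_right hGH]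
    · rw [if_neg hH]
      by_cases hG : aRatio G ≤ 1/2
      · rw [if_pos hG]
        have : aRatio G ≤ 1 := by linarith
        rw [max_eq_right this]
      · rw [if_neg hG]; simp
  · rw [max_eq_left hGH]
    by_cases hG : aRatio G ≤ 1/2
    · rw [if_pos hG, if_pos (hGH.trans hG), max_eq_left hGH]
    · rw [if_neg hG]
      by_cases hH : aRatio H ≤ 1/2
      · rw [if_pos hH]
        have : aRatio H ≤ 1 := by linarith
        rw [max_eq_left this]
      · rw [if_neg hH]; simp
end
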